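/- Let n and r be integers with 1 ≤ r < n, and let k_1, …, k_r be pairwise distinct integers in {0, 1, …, n−1}. Then |∑_{j=1}^r e^{2πi·k_j/n}| = sin(πr/n)/sin(π/n) if and only if the residues {k_1, …, k_r} modulo n form a set of r consecutive residues, i.e. there exists k ∈ ℤ with {k_1, …, k_r} ≡ {k, k+1, …, k+r−1} (mod n). -/

import Mathlib

open Complex Finset


noncomputable def zr (n : ℕ) (m : ℤ) : ℂ := Complex.exp (2 * Real.pi * Complex.I * m / n)

lemma zr_congr (n : ℕ) {a b : ℤ} (h : (n:ℤ) ∣ (a - b)) : zr n a = zr n b := by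
  rcases Nat.eq_zero_or_pos n with hn | hn
  · subst hn
    have h0 : a - b = 0 := by simpa using h
    have : a = b := by omega
    rw [this]
  obtain ⟨q, hq⟩ := h
  have ha : a = b + n * q := by omega
  have hnC : (n:ℂ) ≠ 0 := Nat.cast_ne_zero.2 (by omega)
  unfold zr
  rw [ha]
  push_cast
  rw [show (2 * Real.pi * Complex.I * ((b:ℂ) + (n:ℂ) * q) / n)
      = 2 * Real.pi * Complex.I * b / n + q * (2 * Real.pi * Complex.I) by
    field_simp]
  rw [Complex.exp_add, Complex.exp_int_mul_two_pi_mul_I, mul_one]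

lemma zr_eq_exp_mul_I (n : ℕ) (m : ℤ) : zr n m = Complex.exp (((2 * Real.pi * m / n : ℝ) : ℂ) * Complex.I) := by
  unfold zr
  congr 1
  push_cast
  ring

lemma abs_zr (n : ℕ) (m : ℤ) : ‖zr n m‖ = 1 := by
  rw [zr_eq_exp_mul_I]
  exact Complex.norm_exp_ofReal_mul_I _

lemma abs_exp_sub_one (θ : ℝ) : ‖Complex.exp ((θ:ℂ) * Complex.I) - 1‖ = 2 * |Real.sin (θ/2)| := by
  rw [Complex.exp_mul_I, ← Complex.ofReal_cos, ← Complex.ofReal_sin]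
  rw [show ((Real.cos θ : ℂ) + (Real.sin θ : ℂ) * Complex.I - 1
      = ((Real.cos θ - 1 : ℝ) : ℂ) + ((Real.sin θ : ℝ) : ℂ) * Complex.I) by push_cast; ring]
  rw [Complex.norm_def, Complex.normSq_add_mul_I]
  have hc : Real.cos θ = 1 - 2 * Real.sin (θ/2)^2 := by
    have h1 := Real.cos_two_mul (θ/2)
    have h2 := Real.sin_sq_add_cos_sq (θ/2)
    have h3 : 2*(θ/2) = θ := by ring
    rw [h3] at h1
    linarith
  have hs : (Real.cos θ - 1)^2 + (Real.sin θ)^2 = (2*Real.sin (θ/2))^2 := by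
    nlinarith [Real.sin_sq_add_cos_sq θ]
  rw [hs, Real.sqrt_sq_eq_abs, abs_mul]
  norm_num

lemma zr_one_ne_one (n : ℕ) (hn : 2 ≤ n) : zr n 1 ≠ 1 := by
  unfold zr
  intro h
  rw [Complex.exp_eq_one_iff] at h
  obtain ⟨k, hk⟩ := h
  have h2πI : (2 * (Real.pi:ℂ) * Complex.I) ≠ 0 := by
    simp [Real.pi_ne_zero, Complex.I_ne_zero]
  have hnC : (n:ℂ) ≠ 0 := Nat.cast_ne_zero.2 (by omega)
  have hk2 : ((n:ℤ):ℂ) * (k:ℂ) = 1 := by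
    field_simp at hk
    have hk' : (1:ℂ) = (n:ℂ) * (k:ℂ) := by exact_mod_cast hk
    have h1 : (1:ℂ) * (2 * Real.pi * Complex.I) = ((n:ℂ) * (k:ℂ)) * (2 * Real.pi * Complex.I) := by
      linear_combination (2 * (Real.pi:ℂ) * Complex.I) * hk'
    have h2 := mul_right_cancel₀ h2πI h1
    push_cast
    linear_combination -h2
  have hk3 : (n:ℤ) * k = 1 := by exact_mod_cast hk2
  have : (n:ℤ) ∣ 1 := ⟨k, hk3.symm⟩
  have := Int.le_of_dvd one_pos this
  omega

lemma zr_pow (n : ℕ) (hn : 2 ≤ n) (i : ℕ) : zr n 1 ^ i = zr n i := by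
  unfold zr
  rw [← Complex.exp_nat_mul]
  congr 1
  push_cast
  ring

lemma zr_add (n : ℕ) (hn : 2 ≤ n) (c : ℤ) (i : ℕ) : zr n (c + i) = zr n c * zr n i := by
  unfold zr
  rw [← Complex.exp_add]
  congr 1
  have hnC : (n:ℂ) ≠ 0 := Nat.cast_ne_zero.2 (by omega)
  field_simp
  push_cast
  ring

lemma abs_zr_sub_one (n : ℕ) (hn : 2 ≤ n) (m : ℕ) (hm : m ≤ n) :
    ‖zr n m - 1‖ = 2 * Real.sin (Real.pi * m / n) := by
  rw [zr_eq_exp_mul_I, abs_exp_sub_one]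
  rw [show (2 * Real.pi * (((m:ℕ):ℤ):ℝ) / n / 2) = Real.pi * m / n by push_cast; ring]
  have hnn : 0 ≤ Real.sin (Real.pi * m / n) := by
    apply Real.sin_nonneg_of_nonneg_of_le_pi
    · positivity
    · rw [div_le_iff₀ (by positivity : (0:ℝ) < n)]
      have : (m:ℝ) ≤ n := Nat.cast_le.2 hm
      nlinarith [Real.pi_pos]
  rw [_root_.abs_of_nonneg hnn]

lemma arc_abs (n r : ℕ) (hn : 2 ≤ n) (hr : 1 ≤ r) (hrn : r < n) (c : ℤ) :
    ‖∑ i ∈ Finset.range r, zr n (c + i)‖ =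
      Real.sin (Real.pi * r / n) / Real.sin (Real.pi / n) := by
  have hsum : ∑ i ∈ Finset.range r, zr n (c + i) = zr n c * ((zr n 1 ^ r - 1) / (zr n 1 - 1)) := by
    rw [← geom_sum_eq (zr_one_ne_one n hn) r, Finset.mul_sum]
    apply Finset.sum_congr rfl
    intro i _
    rw [zr_add n hn c i, zr_pow n hn i]
  rw [hsum, norm_mul, abs_zr, one_mul, norm_div, zr_pow n hn r]
  rw [abs_zr_sub_one n hn r (le_of_lt hrn)]
  rw [show zr n 1 = zr n (1:ℕ) by norm_num]
  rw [abs_zr_sub_one n hn 1 (by omega)]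
  rw [show (Real.pi * (1:ℕ) / n) = Real.pi / n by push_cast; ring]
  have : Real.sin (Real.pi / n) > 0 := by
    apply Real.sin_pos_of_pos_of_lt_pi
    · positivity
    · rw [div_lt_iff₀ (by positivity)]
      have h2n : (2:ℝ) ≤ n := by exact_mod_cast hn
      nlinarith [Real.pi_pos]
  field_simp


lemma intgeo (n r : ℕ) (hr : 1 ≤ r) (x : ℝ) (W : Finset ℤ)
    (hcard : W.card = r)
    (hW : ∀ m ∈ W, x - n/2 < (m:ℝ) ∧ (m:ℝ) ≤ x + n/2)
    (htop : ∀ m ∈ W, ∀ m' : ℤ, x - n/2 < (m':ℝ) → (m':ℝ) ≤ x + n/2 → m' ∉ W →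
      |(m:ℝ) - x| ≤ |(m':ℝ) - x|) :
    ∃ c : ℤ, W = Finset.Ico c (c + r) := by
  have hne : W.Nonempty := Finset.card_pos.1 (by omega)
  obtain ⟨m₀, hm₀W, hm₀max⟩ := W.exists_max_image (fun m => |(m:ℝ) - x|) hne
  set s := |(m₀:ℝ) - x| with hs
  have hs2 : s ≤ n/2 := by
    obtain ⟨h1, h2⟩ := hW m₀ hm₀W
    rw [hs, abs_le]; constructor <;> linarith
  have hLsub : ∀ m : ℤ, x - s < (m:ℝ) → (m:ℝ) < x + s → m ∈ W := by
    intro m h1 h2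
    by_contra hm
    have h3 := htop m₀ hm₀W m (by linarith) (by linarith) hm
    have h4 : |(m:ℝ) - x| < s := abs_lt.2 ⟨by linarith, by linarith⟩
    rw [← hs] at h3; linarith
  have hminr : x - s ≤ ((W.min' hne : ℤ) : ℝ) :=
    by linarith [(abs_le.1 (hm₀max _ (W.min'_mem hne))).1]
  have hmaxr : ((W.max' hne : ℤ) : ℝ) ≤ x + s :=
    by linarith [(abs_le.1 (hm₀max _ (W.max'_mem hne))).2]
  have hint : ∀ m : ℤ, W.min' hne ≤ m → m ≤ W.max' hne → m ∈ W := by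
    intro m h1 h2
    have h1r : ((W.min' hne : ℤ) : ℝ) ≤ (m:ℝ) := by exact_mod_cast h1
    have h2r : (m:ℝ) ≤ ((W.max' hne : ℤ) : ℝ) := by exact_mod_cast h2
    rcases lt_or_ge (x - s) (m:ℝ) with h3 | h3
    · rcases lt_or_ge (m:ℝ) (x + s) with h4 | h4
      · exact hLsub m h3 h4
      · have : (m:ℝ) = ((W.max' hne : ℤ) : ℝ) := by linarith
        have : m = W.max' hne := by exact_mod_cast this
        rw [this]; exact W.max'_mem hne
    · have : (m:ℝ) = ((W.min' hne : ℤ) : ℝ) := by linarith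
      have : m = W.min' hne := by exact_mod_cast this
      rw [this]; exact W.min'_mem hne
  have hIcc : W = Finset.Icc (W.min' hne) (W.max' hne) := by
    apply Finset.ext
    intro a
    simp only [Finset.mem_Icc]
    constructor
    · intro ha; exact ⟨W.min'_le a ha, W.le_max' a ha⟩
    · intro ⟨h1, h2⟩; exact hint a h1 h2
  refine ⟨W.min' hne, ?_⟩
  have hc : (Finset.Icc (W.min' hne) (W.max' hne)).card = r := by rw [← hIcc, hcard]
  rw [Int.card_Icc] at hc
  apply Finset.ext
  intro a
  rw [Finset.mem_Ico]
  constructor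
  · intro ha
    have h1 := W.min'_le a ha
    have h2 := W.le_max' a ha
    omega
  · intro ⟨h1, h2⟩
    exact hint a h1 (by omega)

lemma geo_aux (n r : ℕ) (hn : 2 ≤ n) (hr : 1 ≤ r) (hrn : r < n) (t : ℝ)
    (intgeo : ∀ (x : ℝ) (W : Finset ℤ), W.card = r →
      (∀ m ∈ W, x - n/2 < (m:ℝ) ∧ (m:ℝ) ≤ x + n/2) →
      (∀ m ∈ W, ∀ m' : ℤ, x - n/2 < (m':ℝ) → (m':ℝ) ≤ x + n/2 → m' ∉ W →
        |(m:ℝ) - x| ≤ |(m':ℝ) - x|) →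
      ∃ c : ℤ, W = Finset.Ico c (c + r))
    (B : Finset (ZMod n)) (hcard : B.card = r)
    (htop : ∀ a ∈ B, ∀ b : ZMod n, b ∉ B →
      Real.cos (2 * Real.pi * (ZMod.val b) / n - t) ≤ Real.cos (2 * Real.pi * (ZMod.val a) / n - t)) :
    ∃ c : ℤ, B = Finset.image (fun i : Fin r => ((c + (i:ℕ) : ℤ) : ZMod n)) Finset.univ := by
  haveI : NeZero n := ⟨by omega⟩
  have hnR : (0:ℝ) < n := by positivity
  set x : ℝ := n * t / (2 * Real.pi) with hx
  have hpi := Real.pi_pos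
  have ht : t = 2 * Real.pi * x / n := by
    rw [hx]; field_simp
  -- integer representative in the window (x - n/2, x + n/2]
  set w : ZMod n → ℤ := fun a => (ZMod.val a : ℤ) - n * toIocDiv hnR (x - n/2) ((ZMod.val a : ℝ)) with hw
  have hwR : ∀ a : ZMod n, (w a : ℝ) = toIocMod hnR (x - n/2) ((ZMod.val a : ℝ)) := by
    intro a
    rw [hw]
    simp only [toIocMod, zsmul_eq_mul]
    push_cast
    ring
  have hwin : ∀ a : ZMod n, x - n/2 < (w a : ℝ) ∧ (w a : ℝ) ≤ x + n/2 := by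
    intro a
    have := toIocMod_mem_Ioc hnR (x - n/2) ((ZMod.val a : ℝ))
    rw [Set.mem_Ioc] at this
    rw [hwR a]
    constructor
    · exact this.1
    · linarith [this.2]
  have hdvd : ∀ a : ZMod n, (n:ℤ) ∣ ((ZMod.val a : ℤ) - w a) := by
    intro a
    exact ⟨toIocDiv hnR (x - n/2) ((ZMod.val a : ℝ)), by rw [hw]; ring⟩
  have hcast : ∀ a : ZMod n, ((w a : ℤ) : ZMod n) = a := by
    intro a
    obtain ⟨q, hq⟩ := hdvd a
    have : w a = (ZMod.val a : ℤ) - n * q := by omega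
    rw [this]
    push_cast
    simp [ZMod.natCast_self, ZMod.natCast_rightInverse a]
  have hwinj : Function.Injective w := by
    intro a b hab
    rw [← hcast a, ← hcast b, hab]
  -- uniqueness of representatives in the window
  have huniq : ∀ (m m' : ℤ), (n:ℤ) ∣ (m - m') →
      x - n/2 < (m:ℝ) → (m:ℝ) ≤ x + n/2 → x - n/2 < (m':ℝ) → (m':ℝ) ≤ x + n/2 → m = m' := by
    intro m m' hd h1 h2 h3 h4
    obtain ⟨q, hq⟩ := hd
    have hql : ((m:ℝ) - m') = (n:ℝ) * q := by exact_mod_cast hq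
    have hq1 : |(q:ℝ)| < 1 := by
      rw [abs_lt]
      constructor <;> nlinarith
    have hq2 : ((|q| : ℤ) : ℝ) < 1 := by rwa [Int.cast_abs]
    have hq3 : |q| < 1 := by exact_mod_cast hq2
    have hq4 : q = 0 := by
      have := abs_lt.mp hq3
      omega
    rw [hq4, mul_zero] at hq
    omega
  -- cos formula
  have hcos : ∀ (m : ℤ) (a : ZMod n), (n:ℤ) ∣ ((ZMod.val a : ℤ) - m) →
      Real.cos (2 * Real.pi * (ZMod.val a) / n - t) = Real.cos (2 * Real.pi * ((m:ℝ) - x) / n) := by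
    intro m a hd
    obtain ⟨q, hq⟩ := hd
    have hvr : ((ZMod.val a : ℕ) : ℝ) = (m:ℝ) + n * q := by
      have : (ZMod.val a : ℤ) = m + n * q := by omega
      exact_mod_cast this
    rw [show (2 * Real.pi * (ZMod.val a) / n - t) = 2 * Real.pi * ((m:ℝ) - x) / n + q * (2 * Real.pi) by
      rw [hvr, ht]; field_simp; ring]
    exact Real.cos_add_int_mul_two_pi _ q
  -- distances
  have hdist : ∀ (m : ℤ), x - n/2 < (m:ℝ) → (m:ℝ) ≤ x + n/2 →
      Real.cos (2 * Real.pi * ((m:ℝ) - x) / n) = Real.cos (2 * Real.pi * |(m:ℝ) - x| / n) := by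
    intro m h1 h2
    have habs : |2 * Real.pi * ((m:ℝ) - x) / n| = 2 * Real.pi * |(m:ℝ) - x| / n := by
      rw [abs_div, abs_mul, _root_.abs_of_nonneg (by positivity : (0:ℝ) ≤ 2 * Real.pi),
        _root_.abs_of_nonneg hnR.le]
    rw [← habs, Real.cos_abs]
  set W : Finset ℤ := B.image w with hWdef
  have hWcard : W.card = r := by rw [hWdef, Finset.card_image_of_injective _ hwinj, hcard]
  have hWwin : ∀ m ∈ W, x - n/2 < (m:ℝ) ∧ (m:ℝ) ≤ x + n/2 := by
    intro m hm
    rw [hWdef, Finset.mem_image] at hm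
    obtain ⟨a, _, rfl⟩ := hm
    exact hwin a
  have hWtop : ∀ m ∈ W, ∀ m' : ℤ, x - n/2 < (m':ℝ) → (m':ℝ) ≤ x + n/2 → m' ∉ W →
      |(m:ℝ) - x| ≤ |(m':ℝ) - x| := by
    intro m hm m' h1 h2 hm'
    rw [hWdef, Finset.mem_image] at hm
    obtain ⟨a, haB, rfl⟩ := hm
    set b : ZMod n := ((m' : ℤ) : ZMod n) with hb
    have hdvdb : (n:ℤ) ∣ ((ZMod.val b : ℤ) - m') := by
      have : ((ZMod.val b : ℤ) : ZMod n) = (m' : ZMod n) := by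
        push_cast
        rw [ZMod.natCast_rightInverse b]
      rw [ZMod.intCast_eq_intCast_iff'] at this
      have h7 := Int.ModEq.dvd (show (ZMod.val b : ℤ) ≡ m' [ZMOD (n:ℤ)] from this)
      exact (dvd_sub_comm).mp h7
    have hbB : b ∉ B := by
      intro hbB
      apply hm'
      have hwb : w b = m' := by
        apply huniq (w b) m' _ (hwin b).1 (hwin b).2 h1 h2
        have h5 := hdvd b
        have h6 : ((ZMod.val b : ℤ) - m') - ((ZMod.val b : ℤ) - w b) = w b - m' := by ring
        exact h6 ▸ dvd_sub hdvdb h5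
      rw [hWdef, Finset.mem_image]
      exact ⟨b, hbB, hwb⟩
    have hc := htop a haB b hbB
    rw [hcos m' b hdvdb, hcos (w a) a (hdvd a)] at hc
    rw [hdist m' h1 h2, hdist (w a) (hwin a).1 (hwin a).2] at hc
    by_contra hlt
    push_neg at hlt
    have hmem1 : 2 * Real.pi * |(m':ℝ) - x| / n ∈ Set.Icc 0 Real.pi := by
      constructor
      · positivity
      · rw [div_le_iff₀ hnR]
        have : |(m':ℝ) - x| ≤ n/2 := abs_le.2 ⟨by linarith, by linarith⟩
        nlinarith
    have hmem2 : 2 * Real.pi * |((w a : ℤ):ℝ) - x| / n ∈ Set.Icc 0 Real.pi := by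
      constructor
      · positivity
      · rw [div_le_iff₀ hnR]
        have h6 := hwin a
        have : |((w a : ℤ):ℝ) - x| ≤ n/2 := abs_le.2 ⟨by linarith [h6.1], by linarith [h6.2]⟩
        nlinarith
    have : Real.cos (2 * Real.pi * |((w a : ℤ):ℝ) - x| / n) < Real.cos (2 * Real.pi * |(m':ℝ) - x| / n) :=
      Real.strictAntiOn_cos hmem1 hmem2 ((div_lt_div_iff_of_pos_right hnR).2 (by nlinarith))
    linarith
  obtain ⟨c, hc⟩ := intgeo x W hWcard hWwin hWtop
  refine ⟨c, ?_⟩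
  have hBsub : B ⊆ W.image (fun m : ℤ => (m : ZMod n)) := by
    intro a haB
    rw [Finset.mem_image]
    exact ⟨w a, by rw [hWdef, Finset.mem_image]; exact ⟨a, haB, rfl⟩, hcast a⟩
  have hBeq : B = W.image (fun m : ℤ => (m : ZMod n)) := by
    apply Finset.eq_of_subset_of_card_le hBsub
    calc (W.image (fun m : ℤ => (m : ZMod n))).card ≤ W.card := Finset.card_image_le
    _ = r := hWcard
    _ = B.card := hcard.symm
  rw [hBeq, hc]
  apply Finset.ext
  intro z
  simp only [Finset.mem_image, Finset.mem_Ico, Finset.mem_univ, true_and]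
  constructor
  · rintro ⟨m, ⟨hm1, hm2⟩, rfl⟩
    refine ⟨⟨(m - c).toNat, by omega⟩, ?_⟩
    congr 1
    simp only []
    omega
  · rintro ⟨i, rfl⟩
    exact ⟨c + i, ⟨by omega, by have := i.isLt; omega⟩, rfl⟩


noncomputable def fz (n : ℕ) (a : ZMod n) : ℂ := zr n ((ZMod.val a : ℕ) : ℤ)

lemma geo (n r : ℕ) (hn : 2 ≤ n) (hr : 1 ≤ r) (hrn : r < n) (t : ℝ)
    (B : Finset (ZMod n)) (hcard : B.card = r)
    (htop : ∀ a ∈ B, ∀ b : ZMod n, b ∉ B →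
      Real.cos (2 * Real.pi * (ZMod.val b) / n - t) ≤ Real.cos (2 * Real.pi * (ZMod.val a) / n - t)) :
    ∃ c : ℤ, B = Finset.image (fun i : Fin r => ((c + (i:ℕ) : ℤ) : ZMod n)) Finset.univ :=
  geo_aux n r hn hr hrn t (fun x W hc hW ht => intgeo n r hr x W hc hW ht) B hcard htop

lemma val_intCast_dvd (n : ℕ) [NeZero n] (m : ℤ) :
    (n:ℤ) ∣ ((ZMod.val ((m : ZMod n)) : ℤ) - m) := by
  have h : (((ZMod.val ((m : ZMod n)) : ℕ) : ℤ) : ZMod n) = (m : ZMod n) := by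
    push_cast
    rw [ZMod.natCast_rightInverse (m : ZMod n)]
  rw [ZMod.intCast_eq_intCast_iff'] at h
  exact (dvd_sub_comm).mp (Int.ModEq.dvd h)

lemma sum_arc_eq (n r : ℕ) (hn : 2 ≤ n) (hrn : r < n) (c : ℤ) :
    ∑ a ∈ Finset.image (fun i : Fin r => ((c + (i:ℕ) : ℤ) : ZMod n)) Finset.univ, fz n a
      = ∑ i ∈ Finset.range r, zr n (c + i) := by
  haveI : NeZero n := ⟨by omega⟩
  rw [Finset.sum_image]
  · calc ∑ i : Fin r, fz n (((c + (i:ℕ) : ℤ)) : ZMod n)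
        = ∑ i : Fin r, zr n (c + ((i:ℕ):ℤ)) := by
          apply Finset.sum_congr rfl
          intro i _
          exact zr_congr n (val_intCast_dvd n (c + (i:ℕ)))
      _ = ∑ i ∈ Finset.range r, zr n (c + i) :=
          Fin.sum_univ_eq_sum_range (fun i => zr n (c + (i:ℕ))) r
  · intro i _ j _ hij
    have hsub : (n:ℤ) ∣ ((((i:ℕ):ℤ) - ((j:ℕ):ℤ))) := by
      rw [← ZMod.intCast_zmod_eq_zero_iff_dvd]
      push_cast
      push_cast at hij
      linear_combination hij
    have hz := Int.eq_zero_of_dvd_of_natAbs_lt_natAbs hsub (by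
      have hi := i.isLt
      have hj := j.isLt
      omega)
    have : (i:ℕ) = (j:ℕ) := by omega
    exact Fin.ext this

theorem abs_sum_distinct_roots_of_unity_eq_iff_consecutive
    (n r : ℕ) (hr : 1 ≤ r) (hrn : r < n)
    (k : Fin r → ℕ) (hk : ∀ j, k j < n) (hinj : Function.Injective k) :
    ‖∑ j : Fin r, Complex.exp (2 * Real.pi * Complex.I * (k j) / n)‖ =
        Real.sin (Real.pi * r / n) / Real.sin (Real.pi / n) ↔
      ∃ c : ℤ, Finset.image (fun j : Fin r => ((k j : ℤ) : ZMod n)) Finset.univ =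
        Finset.image (fun i : Fin r => ((c + (i : ℕ) : ℤ) : ZMod n)) Finset.univ := by
  have hn : 2 ≤ n := by omega
  haveI : NeZero n := ⟨by omega⟩
  have hpi := Real.pi_pos
  have hnR : (0:ℝ) < n := by positivity
  have hsinn : 0 < Real.sin (Real.pi / n) := by
    apply Real.sin_pos_of_pos_of_lt_pi
    · positivity
    · rw [div_lt_iff₀ hnR]
      have h2n : (2:ℝ) ≤ n := by exact_mod_cast hn
      nlinarith
  have hTpos : 0 < Real.sin (Real.pi * r / n) / Real.sin (Real.pi / n) := by
    apply div_pos _ hsinn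
    apply Real.sin_pos_of_pos_of_lt_pi
    · have : (0:ℝ) < r := by exact_mod_cast hr
      positivity
    · rw [div_lt_iff₀ hnR]
      have : (r:ℝ) < n := by exact_mod_cast hrn
      nlinarith
  have hcast2 : ∀ j : Fin r, ((k j : ℤ) : ZMod n) = ((k j : ℕ) : ZMod n) := by
    intro j; push_cast; rfl
  have hAinj : Function.Injective (fun j : Fin r => ((k j : ℤ) : ZMod n)) := by
    intro i j h
    simp only [hcast2] at h
    apply hinj
    have := congrArg ZMod.val h
    rwa [ZMod.val_cast_of_lt (hk i), ZMod.val_cast_of_lt (hk j)] at this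
  set A := Finset.image (fun j : Fin r => ((k j : ℤ) : ZMod n)) Finset.univ with hA
  have hAcard : A.card = r := by
    rw [hA, Finset.card_image_of_injective _ hAinj, Finset.card_univ, Fintype.card_fin]
  have hsumA : (∑ j : Fin r, Complex.exp (2 * Real.pi * Complex.I * (k j) / n)) = ∑ a ∈ A, fz n a := by
    rw [hA, Finset.sum_image (fun i _ j _ h => hAinj h)]
    apply Finset.sum_congr rfl
    intro j _
    unfold fz
    rw [hcast2 j, ZMod.val_cast_of_lt (hk j)]
    unfold zr
    norm_cast
  constructor
  · -- forward
    intro h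
    have hgA : ‖∑ a ∈ A, fz n a‖ = Real.sin (Real.pi * r / n) / Real.sin (Real.pi / n) := by
      rw [← hsumA]; exact h
    have swap : ∀ B : Finset (ZMod n), B.card = r →
        (∀ B' : Finset (ZMod n), B'.card = r →
          ‖∑ a ∈ B', fz n a‖ ≤ ‖∑ a ∈ B, fz n a‖) →
        0 < ‖∑ a ∈ B, fz n a‖ →
        ∃ c : ℤ, B = Finset.image (fun i : Fin r => ((c + (i:ℕ) : ℤ) : ZMod n)) Finset.univ := by
      intro B hBcard hBmax hBpos
      set S := ∑ a ∈ B, fz n a with hS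
      set E := Complex.exp (((-Complex.arg S : ℝ) : ℂ) * Complex.I) with hE
      have hre : ∀ z : ℂ, (z * E).re ≤ ‖z‖ := by
        intro z
        calc (z * E).re ≤ ‖z * E‖ := Complex.re_le_norm _
          _ = ‖z‖ * ‖E‖ := norm_mul z E
          _ = ‖z‖ := by rw [hE, Complex.norm_exp_ofReal_mul_I, mul_one]
      have hSre : (S * E).re = ‖S‖ := by
        conv_lhs => rw [← Complex.norm_mul_exp_arg_mul_I S]
        rw [mul_assoc, ← Complex.exp_add]
        rw [show ((S.arg : ℂ) * Complex.I + ((-S.arg : ℝ) : ℂ) * Complex.I) = 0 by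
          push_cast; ring]
        rw [Complex.exp_zero, mul_one, Complex.ofReal_re]
      have hφ : ∀ a : ZMod n, ((fz n a) * E).re = Real.cos (2 * Real.pi * (ZMod.val a) / n - Complex.arg S) := by
        intro a
        rw [hE]
        unfold fz
        rw [zr_eq_exp_mul_I, ← Complex.exp_add]
        rw [show (((2 * Real.pi * (((ZMod.val a : ℕ):ℤ):ℝ) / n : ℝ)):ℂ) * Complex.I + ((-Complex.arg S : ℝ):ℂ) * Complex.I
            = (((2 * Real.pi * (ZMod.val a : ℕ) / n - Complex.arg S : ℝ)):ℂ) * Complex.I by push_cast; ring]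
        exact Complex.exp_ofReal_mul_I_re _
      have htop : ∀ a ∈ B, ∀ b : ZMod n, b ∉ B →
          Real.cos (2 * Real.pi * (ZMod.val b) / n - Complex.arg S) ≤ Real.cos (2 * Real.pi * (ZMod.val a) / n - Complex.arg S) := by
        intro a ha b hb
        have hbea : b ∉ B.erase a := fun hmem => hb (Finset.mem_of_mem_erase hmem)
        have hB'card : (insert b (B.erase a)).card = r := by
          rw [Finset.card_insert_of_notMem hbea, Finset.card_erase_of_mem ha, hBcard]
          omega
        have hsum' : ∑ a' ∈ insert b (B.erase a), fz n a' = fz n b + (S - fz n a) := by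
          rw [Finset.sum_insert hbea, Finset.sum_erase_eq_sub ha]
        have h1 : ((fz n b + (S - fz n a)) * E).re ≤ ‖S‖ := by
          calc ((fz n b + (S - fz n a)) * E).re
              = ((∑ a' ∈ insert b (B.erase a), fz n a') * E).re := by rw [hsum']
            _ ≤ ‖∑ a' ∈ insert b (B.erase a), fz n a'‖ := hre _
            _ ≤ ‖S‖ := hBmax _ hB'card
        have h3 : ((fz n b + (S - fz n a)) * E).re
            = ((fz n b) * E).re + (S * E).re - ((fz n a) * E).re := by
          simp [add_mul, sub_mul, Complex.add_re, Complex.sub_re]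
          ring
        rw [h3, hSre] at h1
        rw [← hφ a, ← hφ b]
        linarith
      exact geo n r hn hr hrn (Complex.arg S) B hBcard htop
    obtain ⟨B₀, hB₀P, hB₀max⟩ := Finset.exists_max_image
      (Finset.powersetCard r (Finset.univ : Finset (ZMod n)))
      (fun B => ‖∑ a ∈ B, fz n a‖)
      ⟨A, Finset.mem_powersetCard_univ.2 hAcard⟩
    have hB₀card : B₀.card = r := Finset.mem_powersetCard_univ.1 hB₀P
    have hB₀max' : ∀ B' : Finset (ZMod n), B'.card = r →
        ‖∑ a ∈ B', fz n a‖ ≤ ‖∑ a ∈ B₀, fz n a‖ := by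
      intro B' hB'
      exact hB₀max B' (Finset.mem_powersetCard_univ.2 hB')
    have hgB₀pos : 0 < ‖∑ a ∈ B₀, fz n a‖ := by
      have := hB₀max' A hAcard
      rw [hgA] at this
      linarith
    obtain ⟨c₀, hc₀⟩ := swap B₀ hB₀card hB₀max' hgB₀pos
    have hgB₀ : ‖∑ a ∈ B₀, fz n a‖ = Real.sin (Real.pi * r / n) / Real.sin (Real.pi / n) := by
      rw [hc₀, sum_arc_eq n r hn hrn c₀, arc_abs n r hn hr hrn c₀]
    have hAmax : ∀ B' : Finset (ZMod n), B'.card = r →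
        ‖∑ a ∈ B', fz n a‖ ≤ ‖∑ a ∈ A, fz n a‖ := by
      intro B' hB'
      rw [hgA, ← hgB₀]
      exact hB₀max' B' hB'
    have hgApos : 0 < ‖∑ a ∈ A, fz n a‖ := by rw [hgA]; exact hTpos
    exact swap A hAcard hAmax hgApos
  · -- backward
    rintro ⟨c, hc⟩
    rw [hsumA, hc, sum_arc_eq n r hn hrn c, arc_abs n r hn hr hrn c]
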